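/- arXiv:2008.00391 — 3 statements merged into one kernel-verified Lean document; each statement's English description precedes it below -/
import Mathlib

section
/- Let f(y) = -y A(y) + B(y) - γ with A, B as above, F continuous, 1-F(z) > 0 near 0, finite second moment, and 0 < γ < μ₁ where μ₁ = ∫_0^∞ (1-F(z)) dz. Then f is continuous on (0,∞), strictly decreasing, f(0+) = μ₁ - γ > 0, f(y) → -γ as y → ∞, and hence f has a unique positive root λ. -/
open MeasureTheory Set Filter Topology intervalIntegral

/-- Properties of `f(y) = -y A(y) + B(y) - γ`: continuous on `(0,∞)`, strictly
decreasing, `f(0+) = μ₁ - γ > 0`, `f(y) → -γ` as `y → ∞`, and `f` has a unique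
positive root. -/
theorem f_has_unique_positive_root
    (F : ℝ → ℝ) (γ μ₁ : ℝ)
    (hmono : Monotone F)
    (hFcont : Continuous F)
    (hle : ∀ z, F z ≤ 1)
    (hneg : ∀ z < (0 : ℝ), F z = 0)
    (htop : Tendsto F atTop (𝓝 1))
    (hint1 : IntegrableOn (fun z => 1 - F z) (Ioi (0 : ℝ)))
    (hint2 : IntegrableOn (fun z => z * (1 - F z)) (Ioi (0 : ℝ)))
    (hpos : ∃ δ > (0 : ℝ), ∀ z ∈ Ioo (0 : ℝ) δ, F z < 1)
    (hμ₁ : μ₁ = ∫ z in Ioi (0 : ℝ), (1 - F z))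
    (hγ : 0 < γ) (hγμ : γ < μ₁) :
    ContinuousOn
      (fun y : ℝ => -y * (∫ t in (0 : ℝ)..y⁻¹, t * (1 - F t))
        + (∫ t in (0 : ℝ)..y⁻¹, (1 - F t)) - γ) (Ioi 0) ∧
    StrictAntiOn
      (fun y : ℝ => -y * (∫ t in (0 : ℝ)..y⁻¹, t * (1 - F t))
        + (∫ t in (0 : ℝ)..y⁻¹, (1 - F t)) - γ) (Ioi 0) ∧
    Tendsto
      (fun y : ℝ => -y * (∫ t in (0 : ℝ)..y⁻¹, t * (1 - F t))
        + (∫ t in (0 : ℝ)..y⁻¹, (1 - F t)) - γ) (𝓝[>] 0) (𝓝 (μ₁ - γ)) ∧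
    0 < μ₁ - γ ∧
    Tendsto
      (fun y : ℝ => -y * (∫ t in (0 : ℝ)..y⁻¹, t * (1 - F t))
        + (∫ t in (0 : ℝ)..y⁻¹, (1 - F t)) - γ) atTop (𝓝 (-γ)) ∧
    ∃! lam : ℝ, 0 < lam ∧
      -lam * (∫ t in (0 : ℝ)..lam⁻¹, t * (1 - F t))
        + (∫ t in (0 : ℝ)..lam⁻¹, (1 - F t)) - γ = 0 := by
  set g : ℝ → ℝ := fun z => 1 - F z with hg
  set f : ℝ → ℝ := fun y : ℝ => -y * (∫ t in (0 : ℝ)..y⁻¹, t * (1 - F t))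
        + (∫ t in (0 : ℝ)..y⁻¹, (1 - F t)) - γ with hf
  have hF0 : ∀ z, 0 ≤ F z := by
    intro z
    rcases lt_or_ge z 0 with h | h
    · exact (hneg z h).ge
    · calc (0:ℝ) = F (-1) := (hneg (-1) (by norm_num)).symm
        _ ≤ F z := hmono (by linarith)
  have hg0 : ∀ z, 0 ≤ g z := fun z => by simp [hg]; linarith [hle z]
  have hg1 : ∀ z, g z ≤ 1 := fun z => by simp [hg]; linarith [hF0 z]
  have hgc : Continuous g := continuous_const.sub hFcont
  have htgc : Continuous (fun t : ℝ => t * g t) := continuous_id.mul hgc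
  have hgii : ∀ a b : ℝ, IntervalIntegrable g volume a b := fun a b => hgc.intervalIntegrable a b
  have htgii : ∀ a b : ℝ, IntervalIntegrable (fun t : ℝ => t * g t) volume a b :=
    fun a b => htgc.intervalIntegrable a b
  set A : ℝ → ℝ := fun c => ∫ t in (0:ℝ)..c, t * g t with hA
  set B : ℝ → ℝ := fun c => ∫ t in (0:ℝ)..c, g t with hB
  have hfA : ∀ y : ℝ, f y = -y * A y⁻¹ + B y⁻¹ - γ := fun y => rfl
  have hAc : Continuous A := continuous_primitive htgii 0
  have hBc : Continuous B := continuous_primitive hgii 0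
  -- continuity
  have hinv : ContinuousOn (fun y : ℝ => y⁻¹) (Ioi (0:ℝ)) :=
    continuousOn_id.inv₀ (fun x hx => ne_of_gt hx)
  have hcont : ContinuousOn f (Ioi 0) := by
    apply ContinuousOn.sub _ continuousOn_const
    exact ((continuousOn_id.neg).mul (hAc.comp_continuousOn hinv)).add
      (hBc.comp_continuousOn hinv)
  -- limit at 0+
  have hlim0 : Tendsto f (𝓝[>] 0) (𝓝 (μ₁ - γ)) := by
    have h1 : Tendsto (fun y : ℝ => y⁻¹) (𝓝[>] (0:ℝ)) atTop := tendsto_inv_nhdsGT_zero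
    have hBlim : Tendsto (fun y : ℝ => B y⁻¹) (𝓝[>] (0:ℝ)) (𝓝 μ₁) := by
      rw [hμ₁]
      exact intervalIntegral_tendsto_integral_Ioi 0 hint1 h1
    have hAlim : Tendsto (fun y : ℝ => A y⁻¹) (𝓝[>] (0:ℝ))
        (𝓝 (∫ z in Ioi (0:ℝ), z * (1 - F z))) :=
      intervalIntegral_tendsto_integral_Ioi 0 hint2 h1
    have hid : Tendsto (fun y : ℝ => -y) (𝓝[>] (0:ℝ)) (𝓝 0) := by
      have := (tendsto_id.mono_left (nhdsWithin_le_nhds : 𝓝[>] (0:ℝ) ≤ 𝓝 0)).neg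
      simpa using this
    have h2 := ((hid.mul hAlim).add hBlim).sub (tendsto_const_nhds (x := γ))
    rw [zero_mul, zero_add] at h2
    exact h2
  -- limit at ∞
  have hlimtop : Tendsto f atTop (𝓝 (-γ)) := by
    have h1 : Tendsto (fun y : ℝ => y⁻¹) atTop (𝓝 (0:ℝ)) := tendsto_inv_atTop_zero
    have hBlim : Tendsto (fun y : ℝ => B y⁻¹) atTop (𝓝 0) := by
      have := (hBc.tendsto 0).comp h1
      simpa [hB, intervalIntegral.integral_same, Function.comp_def] using this
    have hAlim : Tendsto (fun y : ℝ => y * A y⁻¹) atTop (𝓝 0) := by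
      apply squeeze_zero' (f := fun y : ℝ => y * A y⁻¹) (g := fun y : ℝ => y⁻¹ / 2)
      · filter_upwards [eventually_gt_atTop (0:ℝ)] with y hy
        have h0 : (0:ℝ) ≤ y⁻¹ := by positivity
        have : 0 ≤ A y⁻¹ :=
          intervalIntegral.integral_nonneg h0 (fun u hu => mul_nonneg hu.1 (hg0 u))
        positivity
      · filter_upwards [eventually_gt_atTop (0:ℝ)] with y hy
        have h0 : (0:ℝ) ≤ y⁻¹ := by positivity
        have hmle : A y⁻¹ ≤ (y⁻¹)^2 / 2 := by
          have h2 : A y⁻¹ ≤ ∫ t in (0:ℝ)..y⁻¹, (t : ℝ) := by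
            apply intervalIntegral.integral_mono_on h0 (htgii 0 y⁻¹)
              (continuous_id'.intervalIntegrable 0 y⁻¹)
            intro x hx
            nlinarith [hg1 x, hx.1, hg0 x]
          simpa [integral_id] using h2
        calc y * A y⁻¹ ≤ y * ((y⁻¹)^2 / 2) := by
              exact mul_le_mul_of_nonneg_left hmle hy.le
          _ = y⁻¹ / 2 := by field_simp
      · simpa using h1.div_const 2
    have : Tendsto (fun y : ℝ => -(y * A y⁻¹) + B y⁻¹ - γ) atTop (𝓝 (-0 + 0 - γ)) :=
      (hAlim.neg.add hBlim).sub tendsto_const_nhds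
    simp only [neg_zero, zero_add, neg_mul] at this ⊢
    convert this using 2 <;> ring
  -- strict anti
  have hkey : ∀ a : ℝ, ∀ c : ℝ, -a * A c + B c = ∫ t in (0:ℝ)..c, (1 - a * t) * g t := by
    intro a c
    have : (∫ t in (0:ℝ)..c, (1 - a * t) * g t)
        = (∫ t in (0:ℝ)..c, g t - a * (t * g t)) := by
      apply intervalIntegral.integral_congr
      intro x _; ring
    rw [this, intervalIntegral.integral_sub (hgii 0 c)
      (((htgii 0 c).const_mul a)), intervalIntegral.integral_const_mul]
    ring
  have hApos : ∀ u : ℝ, 0 < u → 0 < A u := by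
    intro u hu
    obtain ⟨δ, hδ, hFδ⟩ := hpos
    set c := min δ u with hc
    have hc0 : 0 < c := lt_min hδ hu
    have hcu : c ≤ u := min_le_right _ _
    have h1 : 0 < ∫ t in (0:ℝ)..c, t * g t := by
      apply intervalIntegral_pos_of_pos_on (htgii 0 c) _ hc0
      intro x hx
      have hxδ : x ∈ Ioo (0:ℝ) δ := ⟨hx.1, lt_of_lt_of_le hx.2 (min_le_left _ _)⟩
      have : 0 < g x := by simp [hg]; linarith [hFδ x hxδ]
      exact mul_pos hx.1 this
    have h2 : 0 ≤ ∫ t in c..u, t * g t :=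
      intervalIntegral.integral_nonneg hcu (fun x hx => mul_nonneg (hc0.le.trans hx.1) (hg0 x))
    have h3 : A u = (∫ t in (0:ℝ)..c, t * g t) + ∫ t in c..u, t * g t :=
      (intervalIntegral.integral_add_adjacent_intervals (htgii 0 c) (htgii c u)).symm
    rw [h3]; linarith
  have hanti : StrictAntiOn f (Ioi 0) := by
    intro x hx y hy hxy
    simp only [mem_Ioi] at hx hy
    have hx0 : (0:ℝ) < x := hx
    have hinvlt : y⁻¹ < x⁻¹ := by
      exact inv_strictAnti₀ hx hxy
    have hy0 : (0:ℝ) < y⁻¹ := by positivity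
    have hfx : f x = (∫ t in (0:ℝ)..x⁻¹, (1 - x * t) * g t) - γ := by
      rw [hfA, hkey]
    have hfy : f y = (∫ t in (0:ℝ)..y⁻¹, (1 - y * t) * g t) - γ := by
      rw [hfA, hkey]
    have hic : ∀ a u v : ℝ, IntervalIntegrable (fun t => (1 - a * t) * g t) volume u v :=
      fun a u v => ((continuous_const.sub (continuous_const.mul continuous_id)).mul hgc).intervalIntegrable u v
    have hsplit : (∫ t in (0:ℝ)..x⁻¹, (1 - x * t) * g t)
        = (∫ t in (0:ℝ)..y⁻¹, (1 - x * t) * g t) + ∫ t in y⁻¹..x⁻¹, (1 - x * t) * g t :=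
      (intervalIntegral.integral_add_adjacent_intervals (hic x 0 y⁻¹) (hic x y⁻¹ x⁻¹)).symm
    have hdiff : (∫ t in (0:ℝ)..y⁻¹, (1 - x * t) * g t) - (∫ t in (0:ℝ)..y⁻¹, (1 - y * t) * g t)
        = (y - x) * A y⁻¹ := by
      rw [← intervalIntegral.integral_sub (hic x 0 y⁻¹) (hic y 0 y⁻¹)]
      rw [hA, ← intervalIntegral.integral_const_mul]
      apply intervalIntegral.integral_congr
      intro t _; ring
    have hmid : 0 ≤ ∫ t in y⁻¹..x⁻¹, (1 - x * t) * g t := by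
      apply intervalIntegral.integral_nonneg hinvlt.le
      intro u hu
      have h1 : x * u ≤ 1 := by
        have : u ≤ x⁻¹ := hu.2
        calc x * u ≤ x * x⁻¹ := by nlinarith
          _ = 1 := mul_inv_cancel₀ hx0.ne'
      exact mul_nonneg (by linarith) (hg0 u)
    have hposA : 0 < (y - x) * A y⁻¹ := mul_pos (by linarith) (hApos _ hy0)
    have : f x - f y > 0 := by
      rw [hfx, hfy, hsplit]
      linarith
    linarith
  -- existence and uniqueness of root
  refine ⟨hcont, hanti, hlim0, by linarith, hlimtop, ?_⟩
  have hev1 : ∀ᶠ y in 𝓝[>] (0:ℝ), 0 < f y :=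
    (tendsto_order.1 hlim0).1 0 (by linarith)
  obtain ⟨a, hfa, ha⟩ := (hev1.and self_mem_nhdsWithin).exists
  have ha : (0:ℝ) < a := ha
  have hev2 : ∀ᶠ y in atTop, f y < 0 :=
    (tendsto_order.1 hlimtop).2 0 (by linarith)
  obtain ⟨b, hfb, hab⟩ := (hev2.and (eventually_gt_atTop a)).exists
  have hIcc : Icc a b ⊆ Ioi (0:ℝ) := fun z hz => lt_of_lt_of_le ha hz.1
  have hivt := intermediate_value_Icc' hab.le (hcont.mono hIcc)
  have h0mem : (0:ℝ) ∈ Icc (f b) (f a) := ⟨hfb.le, hfa.le⟩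
  obtain ⟨lam, hlam, hflam⟩ := hivt h0mem
  refine ⟨lam, ⟨lt_of_lt_of_le ha hlam.1, hflam⟩, ?_⟩
  rintro z ⟨hz, hfz⟩
  have hzIoi : z ∈ Ioi (0:ℝ) := hz
  have hlamIoi : lam ∈ Ioi (0:ℝ) := hIcc hlam
  exact hanti.injOn hzIoi hlamIoi (by rw [show f z = 0 from hfz, show f lam = 0 from hflam])
end

section
/- Define F̃(y,z) = A(-y/z) where A(w) = ∫_0^{1/w} t(1-F(t)) dt for w > 0 and A(w) = ∫_0^∞ t(1-F(t)) dt for w ≤ 0, with F the CDF of a nonnegative random variable satisfying t^3(1-F(t)) ≤ C for all t ≥ 0. Then F̃ is Lipschitz continuous on (-∞,∞) × [1,∞) with a Lipschitz constant depending only on C. -/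
open MeasureTheory Set Filter Topology

noncomputable def Afun (F : ℝ → ℝ) : ℝ → ℝ := fun w =>
  if 0 < w then ∫ t in Ioo (0 : ℝ) w⁻¹, t * (1 - F t)
  else ∫ t in Ioi (0 : ℝ), t * (1 - F t)

section Aux

variable {F : ℝ → ℝ} {C : ℝ}

private lemma g_meas (hF : Monotone F) : Measurable (fun t : ℝ => t * (1 - F t)) :=
  measurable_id.mul (measurable_const.sub hF.measurable)

private lemma g_nonneg (h1 : ∀ z, F z ≤ 1) {t : ℝ} (ht : 0 ≤ t) : 0 ≤ t * (1 - F t) :=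
  mul_nonneg ht (by linarith [h1 t])

private lemma g_le_t (hF : Monotone F) (h0 : ∀ z < (0:ℝ), F z = 0) {t : ℝ} (ht : 0 ≤ t) :
    t * (1 - F t) ≤ t := by
  have : (0:ℝ) ≤ F t := by
    have := hF (show (-1:ℝ) ≤ t by linarith)
    rw [h0 (-1) (by norm_num)] at this; exact this
  nlinarith

private lemma g_le_pow (hC : 0 < C)
    (htail : ∀ z ≥ (0:ℝ), z ^ 3 * (1 - F z) ≤ C) {t : ℝ} (ht : 0 < t) :
    t * (1 - F t) ≤ C * t ^ (-2 : ℝ) := by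
  have h := htail t ht.le
  rw [Real.rpow_neg ht.le, Real.rpow_two]
  rw [show (C : ℝ) * (t ^ 2)⁻¹ = (C / t ^ 3) * t by field_simp]
  have h2 : 1 - F t ≤ C / t ^ 3 := by
    rw [le_div_iff₀ (by positivity)]; nlinarith
  nlinarith

end Aux

section Aux2

variable {F : ℝ → ℝ} {C : ℝ}

private lemma h_int {c : ℝ} (hc : 0 < c) :
    IntegrableOn (fun t : ℝ => C * t ^ (-2 : ℝ)) (Ioi c) :=
  (integrableOn_Ioi_rpow_of_lt (by norm_num) hc).const_mul C

private lemma h_val (hC : 0 < C) {c : ℝ} (hc : 0 < c) :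
    ∫ t in Ioi c, C * t ^ (-2 : ℝ) = C * c⁻¹ := by
  rw [MeasureTheory.integral_const_mul, integral_Ioi_rpow_of_lt (by norm_num) hc]
  norm_num [Real.rpow_neg_one]

private lemma g_intOn (hF : Monotone F) (h0 : ∀ z < (0:ℝ), F z = 0)
    (h1 : ∀ z, F z ≤ 1) (hC : 0 < C)
    (htail : ∀ z ≥ (0:ℝ), z ^ 3 * (1 - F z) ≤ C) :
    IntegrableOn (fun t : ℝ => t * (1 - F t)) (Ioi 0) := by
  have : (Ioi (0:ℝ)) = Ioc 0 1 ∪ Ioi 1 := (Ioc_union_Ioi_eq_Ioi zero_le_one).symm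
  rw [this]
  apply IntegrableOn.union
  · apply Measure.integrableOn_of_bounded (M := 1) (by simp)
      (g_meas hF).aestronglyMeasurable
    filter_upwards [ae_restrict_mem measurableSet_Ioc] with t ht
    rw [Real.norm_eq_abs, abs_of_nonneg (g_nonneg h1 ht.1.le)]
    calc t * (1 - F t) ≤ t := g_le_t hF h0 ht.1.le
    _ ≤ 1 := ht.2
  · apply Integrable.mono (h_int one_pos) (g_meas hF).aestronglyMeasurable.restrict
    filter_upwards [ae_restrict_mem measurableSet_Ioi] with t ht
    have ht0 : (0:ℝ) < t := lt_trans one_pos ht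
    rw [Real.norm_eq_abs, Real.norm_eq_abs, abs_of_nonneg (g_nonneg h1 ht0.le),
      abs_of_nonneg (by positivity)]
    exact g_le_pow hC htail ht0

end Aux2

section Aux3

variable {F : ℝ → ℝ} {C : ℝ}

private lemma split_Ioi {f : ℝ → ℝ} {a b : ℝ} (hab : a ≤ b) (hf : IntegrableOn f (Ioi a)) :
    ∫ t in Ioi a, f t = (∫ t in Ioc a b, f t) + ∫ t in Ioi b, f t := by
  rw [← setIntegral_union (Ioc_disjoint_Ioi le_rfl) measurableSet_Ioi
    (hf.mono_set Ioc_subset_Ioi_self) (hf.mono_set (Ioi_subset_Ioi hab)),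
    Ioc_union_Ioi_eq_Ioi hab]

private lemma split_Ioc {f : ℝ → ℝ} {a b c : ℝ} (hab : a ≤ b) (hbc : b ≤ c)
    (hf : IntegrableOn f (Ioc a c)) :
    ∫ t in Ioc a c, f t = (∫ t in Ioc a b, f t) + ∫ t in Ioc b c, f t := by
  rw [← setIntegral_union (Ioc_disjoint_Ioc_of_le le_rfl) measurableSet_Ioc
    (hf.mono_set (Ioc_subset_Ioc le_rfl hbc)) (hf.mono_set (Ioc_subset_Ioc hab le_rfl)),
    Ioc_union_Ioc_eq_Ioc hab hbc]

end Aux3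

section Aux4

variable {F : ℝ → ℝ} {C : ℝ}
  (hF : Monotone F) (h0 : ∀ z < (0:ℝ), F z = 0) (h1 : ∀ z, F z ≤ 1) (hC : 0 < C)
  (htail : ∀ z ≥ (0:ℝ), z ^ 3 * (1 - F z) ≤ C)

include hF h0 h1 hC htail

private lemma tail_g {c : ℝ} (hc : 0 < c) :
    ∫ t in Ioi c, t * (1 - F t) ≤ C * c⁻¹ := by
  rw [← h_val (C := C) hC hc]
  apply setIntegral_mono_on
    ((g_intOn hF h0 h1 hC htail).mono_set (Ioi_subset_Ioi hc.le))
    (h_int hc) measurableSet_Ioi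
  exact fun t ht => g_le_pow hC htail (hc.trans ht)

private lemma B1 {a b : ℝ} (ha : 0 < a) (hab : a ≤ b) :
    ∫ t in Ioc a b, t * (1 - F t) ≤ C * (a⁻¹ - b⁻¹) := by
  have hb : 0 < b := lt_of_lt_of_le ha hab
  have key : ∫ t in Ioc a b, t * (1 - F t) ≤ ∫ t in Ioc a b, C * t ^ (-2:ℝ) := by
    apply setIntegral_mono_on
      ((g_intOn hF h0 h1 hC htail).mono_set
        ((Ioc_subset_Ioi_self).trans (Ioi_subset_Ioi ha.le)))
      ((h_int ha).mono_set Ioc_subset_Ioi_self) measurableSet_Ioc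
    exact fun t ht => g_le_pow hC htail (ha.trans ht.1)
  have e : ∫ t in Ioc a b, C * t ^ (-2:ℝ)
      = (∫ t in Ioi a, C * t ^ (-2:ℝ)) - ∫ t in Ioi b, C * t ^ (-2:ℝ) := by
    rw [split_Ioi hab (h_int ha)]; ring
  rw [e, h_val hC ha, h_val hC hb] at key
  linarith

private lemma B2 {a b : ℝ} (ha : 0 < a) (hab : a ≤ b) :
    ∫ t in Ioc a b, t * (1 - F t) ≤ max C 1 * (b - a) := by
  have := norm_setIntegral_le_of_norm_le_const (μ := volume) (s := Ioc a b)
    (f := fun t => t * (1 - F t)) (C := max C 1)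
    (by rw [Real.volume_Ioc]; exact ENNReal.ofReal_lt_top) ?_
  · rw [Real.volume_real_Ioc_of_le hab] at this
    calc ∫ t in Ioc a b, t * (1 - F t) ≤ |∫ t in Ioc a b, t * (1 - F t)| := le_abs_self _
    _ = ‖∫ t in Ioc a b, t * (1 - F t)‖ := (Real.norm_eq_abs _).symm
    _ ≤ max C 1 * (b - a) := this
  · intro t ht
    have ht0 : 0 < t := ha.trans ht.1
    rw [Real.norm_eq_abs, abs_of_nonneg (g_nonneg h1 ht0.le)]
    rcases le_or_gt t 1 with h | h
    · exact ((g_le_t hF h0 ht0.le).trans h).trans (le_max_right _ _)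
    · refine (g_le_pow hC htail ht0).trans ?_
      have : t ^ (-2:ℝ) ≤ 1 := by
        rw [Real.rpow_neg ht0.le, Real.rpow_two]
        rw [inv_le_one_iff₀]
        right; nlinarith
      calc C * t ^ (-2:ℝ) ≤ C * 1 := by
            apply mul_le_mul_of_nonneg_left this hC.le
      _ = C := mul_one C
      _ ≤ max C 1 := le_max_left _ _

omit hF h0 h1 hC htail in
private lemma A_pos' {w : ℝ} (hw : 0 < w) :
    Afun F w = ∫ t in Ioc 0 w⁻¹, t * (1 - F t) := by
  rw [Afun, if_pos hw, integral_Ioc_eq_integral_Ioo]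

omit hF h0 h1 hC htail in
private lemma A_nonpos' {w : ℝ} (hw : w ≤ 0) :
    Afun F w = ∫ t in Ioi 0, t * (1 - F t) := by
  rw [Afun, if_neg (not_lt.mpr hw)]

private lemma L1' {w₁ w₂ : ℝ} (h : w₂ ≤ w₁) :
    |Afun F w₁ - Afun F w₂| ≤ C * |w₁ - w₂| := by
  have habs : |w₁ - w₂| = w₁ - w₂ := abs_of_nonneg (by linarith)
  rcases le_or_gt w₁ 0 with hw1 | hw1
  · rw [A_nonpos' (F := F) hw1, A_nonpos' (F := F) (h.trans hw1)]
    simp only [sub_self, abs_zero]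
    positivity
  · rcases le_or_gt w₂ 0 with hw2 | hw2
    · have hinv : 0 < w₁⁻¹ := by positivity
      have hd : Afun F w₂ - Afun F w₁ = ∫ t in Ioi w₁⁻¹, t * (1 - F t) := by
        rw [A_nonpos' (F := F) hw2, A_pos' (F := F) hw1,
          split_Ioi (le_of_lt hinv) (g_intOn hF h0 h1 hC htail)]
        ring
      have hd0 : 0 ≤ Afun F w₂ - Afun F w₁ := by
        rw [hd]
        exact setIntegral_nonneg measurableSet_Ioi
          (fun t ht => g_nonneg h1 (le_of_lt (hinv.trans ht)))
      have hdb : Afun F w₂ - Afun F w₁ ≤ C * w₁ := by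
        rw [hd]
        have := tail_g hF h0 h1 hC htail hinv
        rwa [inv_inv] at this
      rw [abs_sub_comm, abs_of_nonneg hd0, habs]
      nlinarith
    · have hinv1 : 0 < w₁⁻¹ := by positivity
      have hinv : w₁⁻¹ ≤ w₂⁻¹ := by
        apply inv_anti₀ hw2 h
      have hd : Afun F w₂ - Afun F w₁ = ∫ t in Ioc w₁⁻¹ w₂⁻¹, t * (1 - F t) := by
        rw [A_pos' (F := F) hw2, A_pos' (F := F) hw1,
          split_Ioc (le_of_lt hinv1) hinv
            ((g_intOn hF h0 h1 hC htail).mono_set Ioc_subset_Ioi_self)]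
        ring
      have hd0 : 0 ≤ Afun F w₂ - Afun F w₁ := by
        rw [hd]
        exact setIntegral_nonneg measurableSet_Ioc
          (fun t ht => g_nonneg h1 (le_of_lt (hinv1.trans ht.1)))
      have hdb : Afun F w₂ - Afun F w₁ ≤ C * (w₁ - w₂) := by
        rw [hd]
        have := B1 hF h0 h1 hC htail hinv1 hinv
        rwa [inv_inv, inv_inv] at this
      rw [abs_sub_comm, abs_of_nonneg hd0, habs]
      linarith

private lemma L1 (w₁ w₂ : ℝ) :
    |Afun F w₁ - Afun F w₂| ≤ C * |w₁ - w₂| := by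
  rcases le_total w₂ w₁ with h | h
  · exact L1' hF h0 h1 hC htail h
  · rw [abs_sub_comm, abs_sub_comm w₁ w₂]
    exact L1' hF h0 h1 hC htail h

private lemma L2 {w₁ w₂ : ℝ} (hw1 : 0 < w₁) (hw2 : 0 < w₂) :
    |Afun F w₁ - Afun F w₂| ≤ max C 1 * |w₁⁻¹ - w₂⁻¹| := by
  wlog h : w₂ ≤ w₁ generalizing w₁ w₂
  · rw [abs_sub_comm, abs_sub_comm w₁⁻¹ w₂⁻¹]
    exact this hw2 hw1 (le_of_not_ge h)
  have hinv1 : 0 < w₁⁻¹ := by positivity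
  have hinv : w₁⁻¹ ≤ w₂⁻¹ := inv_anti₀ hw2 h
  have hd : Afun F w₂ - Afun F w₁ = ∫ t in Ioc w₁⁻¹ w₂⁻¹, t * (1 - F t) := by
    rw [A_pos' (F := F) hw2, A_pos' (F := F) hw1,
      split_Ioc (le_of_lt hinv1) hinv
        ((g_intOn hF h0 h1 hC htail).mono_set Ioc_subset_Ioi_self)]
    ring
  have hd0 : 0 ≤ Afun F w₂ - Afun F w₁ := by
    rw [hd]
    exact setIntegral_nonneg measurableSet_Ioc
      (fun t ht => g_nonneg h1 (le_of_lt (hinv1.trans ht.1)))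
  have hdb : Afun F w₂ - Afun F w₁ ≤ max C 1 * (w₂⁻¹ - w₁⁻¹) := by
    rw [hd]
    exact B2 hF h0 h1 hC htail hinv1 hinv
  rw [abs_sub_comm, abs_of_nonneg hd0, abs_of_nonpos (by linarith)]
  linarith

end Aux4

section Final

variable {F : ℝ → ℝ} {C : ℝ}
  (hF : Monotone F) (h0 : ∀ z < (0:ℝ), F z = 0) (h1 : ∀ z, F z ≤ 1) (hC : 0 < C)
  (htail : ∀ z ≥ (0:ℝ), z ^ 3 * (1 - F z) ≤ C)

include hF h0 h1 hC htail

private lemma LemZ (y z₁ z₂ : ℝ) (hz1 : 1 ≤ z₁) (hz2 : 1 ≤ z₂) :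
    |Afun F (-y / z₁) - Afun F (-y / z₂)| ≤ max C 1 * |z₁ - z₂| := by
  have hz1' : (0:ℝ) < z₁ := by linarith
  have hz2' : (0:ℝ) < z₂ := by linarith
  have hmax : (0:ℝ) ≤ max C 1 := le_trans zero_le_one (le_max_right _ _)
  rcases le_or_gt 0 y with hy | hy
  · rw [A_nonpos' (F := F) (div_nonpos_of_nonpos_of_nonneg (by linarith) hz1'.le),
      A_nonpos' (F := F) (div_nonpos_of_nonpos_of_nonneg (by linarith) hz2'.le)]
    simp only [sub_self, abs_zero]
    positivity
  · have hw1 : 0 < -y / z₁ := div_pos (by linarith) hz1'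
    have hw2 : 0 < -y / z₂ := div_pos (by linarith) hz2'
    have hyne : y ≠ 0 := ne_of_lt hy
    rcases le_or_gt 1 (-y) with hy1 | hy1
    · refine (L2 hF h0 h1 hC htail hw1 hw2).trans ?_
      have he : (-y / z₁)⁻¹ - (-y / z₂)⁻¹ = (z₁ - z₂) / (-y) := by
        field_simp; ring
      rw [he, abs_div, abs_of_pos (by linarith : (0:ℝ) < -y)]
      apply mul_le_mul_of_nonneg_left _ hmax
      exact div_le_self (abs_nonneg _) hy1
    · refine ((L1 hF h0 h1 hC htail _ _).trans ?_).trans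
        (mul_le_mul_of_nonneg_right (le_max_left C 1) (abs_nonneg _))
      apply mul_le_mul_of_nonneg_left _ hC.le
      have he : -y / z₁ - -y / z₂ = (-y) * ((z₂ - z₁) / (z₁ * z₂)) := by
        field_simp; ring
      rw [he, abs_mul, abs_div, abs_of_pos (by linarith : (0:ℝ) < -y),
        abs_of_pos (by positivity : (0:ℝ) < z₁ * z₂), abs_sub_comm z₂ z₁]
      have hq : |z₁ - z₂| / (z₁ * z₂) ≤ |z₁ - z₂| :=
        div_le_self (abs_nonneg _) (by nlinarith)
      calc (-y) * (|z₁ - z₂| / (z₁ * z₂)) ≤ 1 * |z₁ - z₂| :=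
            mul_le_mul hy1.le hq (by positivity) zero_le_one
      _ = |z₁ - z₂| := one_mul _

end Final

/-- `F̃(y, z) = A(-y/z)` is Lipschitz on `ℝ × [1, ∞)` with a Lipschitz constant
depending only on the tail bound `C`. -/
theorem Ftilde_lipschitz
    (C : ℝ) (hC : 0 < C) :
    ∃ K : NNReal, ∀ F : ℝ → ℝ,
      Monotone F →
      (∀ z < (0 : ℝ), F z = 0) →
      (∀ z, F z ≤ 1) →
      (∀ z ≥ (0 : ℝ), z ^ 3 * (1 - F z) ≤ C) →
      LipschitzOnWith K (fun p : ℝ × ℝ => Afun F (-p.1 / p.2))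
        (univ ×ˢ Ici (1 : ℝ)) := by
  have hmax : (0:ℝ) ≤ max C 1 := le_trans zero_le_one (le_max_right _ _)
  refine ⟨(C + max C 1).toNNReal, fun F hF h0 h1 htail => ?_⟩
  rw [lipschitzOnWith_iff_dist_le_mul]
  rintro ⟨y₁, z₁⟩ hp ⟨y₂, z₂⟩ hq
  have hz1 : (1:ℝ) ≤ z₁ := hp.2
  have hz2 : (1:ℝ) ≤ z₂ := hq.2
  have hz1' : (0:ℝ) < z₁ := by linarith
  have hK : ((C + max C 1).toNNReal : ℝ) = C + max C 1 :=
    Real.coe_toNNReal _ (by linarith)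
  rw [hK, Prod.dist_eq]
  simp only [Real.dist_eq]
  set d := max |y₁ - y₂| |z₁ - z₂| with hd
  have hd1 : |y₁ - y₂| ≤ d := le_max_left _ _
  have hd2 : |z₁ - z₂| ≤ d := le_max_right _ _
  have hd0 : 0 ≤ d := le_trans (abs_nonneg _) hd1
  have t1 : |Afun F (-y₁ / z₁) - Afun F (-y₂ / z₁)| ≤ C * d := by
    refine (L1 hF h0 h1 hC htail _ _).trans ?_
    apply mul_le_mul_of_nonneg_left _ hC.le
    have he : -y₁ / z₁ - -y₂ / z₁ = (y₂ - y₁) / z₁ := by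
      field_simp; ring
    rw [he, abs_div, abs_of_pos hz1', abs_sub_comm y₂ y₁]
    exact (div_le_self (abs_nonneg _) hz1).trans hd1
  have t2 : |Afun F (-y₂ / z₁) - Afun F (-y₂ / z₂)| ≤ max C 1 * d :=
    (LemZ hF h0 h1 hC htail y₂ z₁ z₂ hz1 hz2).trans
      (mul_le_mul_of_nonneg_left hd2 hmax)
  calc |Afun F (-y₁ / z₁) - Afun F (-y₂ / z₂)|
      ≤ |Afun F (-y₁ / z₁) - Afun F (-y₂ / z₁)|
        + |Afun F (-y₂ / z₁) - Afun F (-y₂ / z₂)| := abs_sub_le _ _ _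
  _ ≤ C * d + max C 1 * d := add_le_add t1 t2
  _ = (C + max C 1) * d := by ring
end

section
/- Define G(y,z) = B(-y/z) where B(w) = ∫_0^{1/w} (1-F(t)) dt for w > 0 and B(w) = ∫_0^∞ (1-F(t)) dt for w ≤ 0, with F the CDF of a nonnegative random variable satisfying t^3(1-F(t)) ≤ C on [0,∞) and finite first moment. Then G is Lipschitz continuous on (-∞,∞) × [1,∞). -/
open MeasureTheory Set Filter Topology

/-- The function `B` from the paper: `B(w) = ∫_0^{1/w} (1 - F t) dt` for `w > 0`
and `B(w) = ∫_0^∞ (1 - F t) dt` for `w ≤ 0`. -/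
noncomputable def Bfun (F : ℝ → ℝ) : ℝ → ℝ := fun w =>
  if 0 < w then ∫ t in Ioo (0 : ℝ) w⁻¹, (1 - F t)
  else ∫ t in Ioi (0 : ℝ), (1 - F t)

section auxGL

variable {C : ℝ} {F : ℝ → ℝ}

private lemma GL_F_nonneg (hmono : Monotone F) (hneg : ∀ z < (0:ℝ), F z = 0) (t : ℝ) :
    0 ≤ F t := by
  rcases lt_or_ge t 0 with h | h
  · exact le_of_eq (hneg t h).symm
  · have h1 : F (-1) = 0 := hneg _ (by norm_num)
    have h2 := hmono (show (-1:ℝ) ≤ t by linarith)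
    linarith

private lemma GL_gInt (hint : IntegrableOn (fun t => 1 - F t) (Ioi (0:ℝ)))
    {a b : ℝ} (ha : 0 < a) (hab : a ≤ b) :
    IntervalIntegrable (fun t => 1 - F t) volume a b := by
  apply IntegrableOn.intervalIntegrable
  apply hint.mono_set
  rw [uIcc_of_le hab]
  exact fun x hx => lt_of_lt_of_le ha hx.1

private lemma GL_int_nonneg (hle : ∀ z, F z ≤ 1) {a b : ℝ} (hab : a ≤ b) :
    0 ≤ ∫ t in a..b, (1 - F t) :=
  intervalIntegral.integral_nonneg hab (fun x _ => by linarith [hle x])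

private lemma GL_int_le_len (hmono : Monotone F) (hneg : ∀ z < (0:ℝ), F z = 0)
    (hint : IntegrableOn (fun t => 1 - F t) (Ioi (0:ℝ)))
    {a b : ℝ} (ha : 0 < a) (hab : a ≤ b) :
    ∫ t in a..b, (1 - F t) ≤ b - a := by
  calc ∫ t in a..b, (1 - F t) ≤ ∫ _t in a..b, (1:ℝ) := by
        apply intervalIntegral.integral_mono_on hab (GL_gInt hint ha hab)
          intervalIntegrable_const
        intro x _
        have := GL_F_nonneg hmono hneg x
        linarith
    _ = b - a := by simp

private lemma GL_int_le_cube (hC : 0 < C)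
    (hbd : ∀ z ≥ (0:ℝ), z ^ 3 * (1 - F z) ≤ C)
    (hint : IntegrableOn (fun t => 1 - F t) (Ioi (0:ℝ)))
    {a b : ℝ} (ha : 1 ≤ a) (hab : a ≤ b) :
    ∫ t in a..b, (1 - F t) ≤ C * (a⁻¹ - b⁻¹) := by
  have ha0 : (0:ℝ) < a := by linarith
  have hb0 : (0:ℝ) < b := by linarith
  have hcont : IntervalIntegrable (fun t : ℝ => C * (t ^ 3)⁻¹) volume a b := by
    apply ContinuousOn.intervalIntegrable
    apply continuousOn_const.mul
    apply ContinuousOn.inv₀ (by fun_prop)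
    intro x hx
    rw [uIcc_of_le hab] at hx
    have : 0 < x := lt_of_lt_of_le ha0 hx.1
    positivity
  have h1 : ∫ t in a..b, (1 - F t) ≤ ∫ t in a..b, C * (t ^ 3)⁻¹ := by
    apply intervalIntegral.integral_mono_on hab (GL_gInt hint ha0 hab) hcont
    intro x hx
    have hx0 : (0:ℝ) < x := lt_of_lt_of_le ha0 hx.1
    rw [← div_eq_mul_inv, le_div_iff₀ (by positivity)]
    nlinarith [hbd x hx0.le]
  have hzp : ∀ t : ℝ, (t ^ 3)⁻¹ = t ^ (-3 : ℤ) := by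
    intro t; rw [zpow_neg]; norm_num [zpow_ofNat]
  have h2 : ∫ t in a..b, C * (t ^ 3)⁻¹
      = C * ((b ^ (-2:ℤ) - a ^ (-2:ℤ)) / ((-2:ℤ) : ℝ)) := by
    rw [intervalIntegral.integral_const_mul]
    congr 1
    simp_rw [hzp]
    rw [integral_zpow]
    · norm_num
    · refine Or.inr ⟨by norm_num, ?_⟩
      rw [uIcc_of_le hab]
      intro h; exact absurd h.1 (by linarith)
  have e1 : b ^ (-2:ℤ) = b⁻¹ ^ 2 := by rw [zpow_neg, inv_pow]; norm_num [zpow_ofNat]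
  have e2 : a ^ (-2:ℤ) = a⁻¹ ^ 2 := by rw [zpow_neg, inv_pow]; norm_num [zpow_ofNat]
  have hA1 : a⁻¹ ≤ 1 := by rw [inv_le_one_iff₀]; right; exact ha
  have hBA : b⁻¹ ≤ a⁻¹ := inv_anti₀ ha0 hab
  have hB0 : (0:ℝ) ≤ b⁻¹ := by positivity
  calc ∫ t in a..b, (1 - F t)
      ≤ C * ((b ^ (-2:ℤ) - a ^ (-2:ℤ)) / ((-2:ℤ) : ℝ)) := h2 ▸ h1
    _ ≤ C * (a⁻¹ - b⁻¹) := by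
        rw [e1, e2, show ((-2:ℤ):ℝ) = -2 by norm_num]
        nlinarith [mul_nonneg hC.le (sub_nonneg.2 hBA)]

private lemma GL_int_le_main (hC : 0 < C)
    (hmono : Monotone F) (hneg : ∀ z < (0:ℝ), F z = 0)
    (hbd : ∀ z ≥ (0:ℝ), z ^ 3 * (1 - F z) ≤ C)
    (hint : IntegrableOn (fun t => 1 - F t) (Ioi (0:ℝ)))
    {a b : ℝ} (ha : 0 < a) (hab : a ≤ b) :
    ∫ t in a..b, (1 - F t) ≤ (C + 1) * (a⁻¹ - b⁻¹) := by
  have hb0 : (0:ℝ) < b := lt_of_lt_of_le ha hab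
  have hd : 0 ≤ a⁻¹ - b⁻¹ := sub_nonneg.2 (inv_anti₀ ha hab)
  rcases le_or_gt 1 a with h1 | h1
  · have := GL_int_le_cube hC hbd hint h1 hab
    nlinarith
  rcases le_or_gt b 1 with h2 | h2
  · -- 0 < a ≤ b ≤ 1
    have hlen := GL_int_le_len hmono hneg hint ha hab
    have e : a⁻¹ - b⁻¹ = (b - a) / (a * b) := by field_simp
    have hab1 : a * b ≤ 1 := by nlinarith
    have hba : b - a ≤ a⁻¹ - b⁻¹ := by
      rw [e, le_div_iff₀ (mul_pos ha hb0)]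
      nlinarith [mul_nonneg (sub_nonneg.2 hab) (sub_nonneg.2 hab1)]
    nlinarith [mul_nonneg hC.le hd]
  · -- a < 1 < b
    have hsplit : (∫ t in a..(1:ℝ), (1 - F t)) + (∫ t in (1:ℝ)..b, (1 - F t))
        = ∫ t in a..b, (1 - F t) :=
      intervalIntegral.integral_add_adjacent_intervals
        (GL_gInt hint ha h1.le) (GL_gInt hint one_pos h2.le)
    have ha1 : ∫ t in a..(1:ℝ), (1 - F t) ≤ 1 - a :=
      GL_int_le_len hmono hneg hint ha h1.le
    have hb1 : ∫ t in (1:ℝ)..b, (1 - F t) ≤ C * ((1:ℝ)⁻¹ - b⁻¹) :=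
      GL_int_le_cube hC hbd hint le_rfl h2.le
    have hai : a * a⁻¹ = 1 := mul_inv_cancel₀ ha.ne'
    have hx : 1 - a ≤ a⁻¹ - 1 := by nlinarith
    have hA1 : 1 ≤ a⁻¹ := by nlinarith
    have hB1 : b⁻¹ ≤ 1 := by rw [inv_le_one_iff₀]; right; exact h2.le
    have hcm : C * (1 - b⁻¹) ≤ C * (a⁻¹ - b⁻¹) :=
      mul_le_mul_of_nonneg_left (by linarith) hC.le
    rw [← hsplit]
    rw [inv_one] at hb1
    linarith

private lemma GL_tail_le (hC : 0 < C)
    (hmono : Monotone F) (hneg : ∀ z < (0:ℝ), F z = 0)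
    (hbd : ∀ z ≥ (0:ℝ), z ^ 3 * (1 - F z) ≤ C)
    (hint : IntegrableOn (fun t => 1 - F t) (Ioi (0:ℝ)))
    {a : ℝ} (ha : 0 < a) :
    ∫ t in Ioi a, (1 - F t) ≤ (C + 1) * a⁻¹ := by
  have key : ∀ c : ℝ, 1 ≤ c → ∫ t in Ioi c, (1 - F t) ≤ C / 2 * (c⁻¹ * c⁻¹) := by
    intro c hc
    have hc0 : (0:ℝ) < c := by linarith
    have hIrpow : IntegrableOn (fun t : ℝ => C * t ^ (-3:ℝ)) (Ioi c) :=
      (integrableOn_Ioi_rpow_of_lt (by norm_num) hc0).const_mul C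
    have h1 : ∫ t in Ioi c, (1 - F t) ≤ ∫ t in Ioi c, C * t ^ (-3:ℝ) := by
      apply setIntegral_mono_on (hint.mono_set (Ioi_subset_Ioi hc0.le)) hIrpow
        measurableSet_Ioi
      intro x hx
      have hx0 : (0:ℝ) < x := lt_trans hc0 hx
      rw [Real.rpow_neg hx0.le, show (3:ℝ) = ((3:ℕ):ℝ) by norm_num,
        Real.rpow_natCast, ← div_eq_mul_inv, le_div_iff₀ (by positivity)]
      nlinarith [hbd x hx0.le]
    have h2 : ∫ t in Ioi c, C * t ^ (-3:ℝ) = C / 2 * (c⁻¹ * c⁻¹) := by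
      rw [MeasureTheory.integral_const_mul, integral_Ioi_rpow_of_lt (by norm_num) hc0]
      have : c ^ ((-3:ℝ) + 1) = (c * c)⁻¹ := by
        rw [show (-3:ℝ) + 1 = -2 by norm_num, Real.rpow_neg hc0.le,
          show (2:ℝ) = ((2:ℕ):ℝ) by norm_num, Real.rpow_natCast]
        ring_nf
      rw [this, mul_inv]
      ring
    linarith
  rcases le_or_gt 1 a with h1 | h1
  · have := key a h1
    have hA1 : a⁻¹ ≤ 1 := by rw [inv_le_one_iff₀]; right; exact h1
    have hA0 : (0:ℝ) ≤ a⁻¹ := by positivity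
    nlinarith [mul_nonneg hC.le (mul_nonneg hA0 (sub_nonneg.2 hA1))]
  · -- 0 < a < 1
    have hsplit : ∫ t in Ioi a, (1 - F t)
        = (∫ t in a..(1:ℝ), (1 - F t)) + ∫ t in Ioi (1:ℝ), (1 - F t) := by
      rw [intervalIntegral.integral_of_le h1.le, ← Ioc_union_Ioi_eq_Ioi h1.le]
      rw [setIntegral_union (Ioc_disjoint_Ioi le_rfl) measurableSet_Ioi
        (hint.mono_set (fun x hx => lt_of_lt_of_le ha hx.1.le))
        (hint.mono_set (Ioi_subset_Ioi one_pos.le))]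
    have ha1 : ∫ t in a..(1:ℝ), (1 - F t) ≤ 1 - a :=
      GL_int_le_len hmono hneg hint ha h1.le
    have ht1 : ∫ t in Ioi (1:ℝ), (1 - F t) ≤ C / 2 * ((1:ℝ)⁻¹ * (1:ℝ)⁻¹) := key 1 le_rfl
    rw [inv_one, mul_one, mul_one] at ht1
    have hai : a * a⁻¹ = 1 := mul_inv_cancel₀ ha.ne'
    have hA1 : 1 ≤ a⁻¹ := by nlinarith
    have hCmul : C + 1 ≤ (C + 1) * a⁻¹ := le_mul_of_one_le_right (by linarith) hA1
    rw [hsplit]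
    linarith

private lemma GL_L_split (hint : IntegrableOn (fun t => 1 - F t) (Ioi (0:ℝ)))
    {a : ℝ} (ha : 0 < a) :
    (∫ t in Ioi (0:ℝ), (1 - F t))
      = (∫ t in (0:ℝ)..a, (1 - F t)) + ∫ t in Ioi a, (1 - F t) := by
  rw [intervalIntegral.integral_of_le ha.le, ← Ioc_union_Ioi_eq_Ioi ha.le]
  rw [setIntegral_union (Ioc_disjoint_Ioi le_rfl) measurableSet_Ioi
    (hint.mono_set Ioc_subset_Ioi_self) (hint.mono_set (Ioi_subset_Ioi ha.le))]

private lemma GL_H_sub (hint : IntegrableOn (fun t => 1 - F t) (Ioi (0:ℝ)))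
    {a b : ℝ} (ha : 0 < a) (hab : a ≤ b) :
    (∫ t in (0:ℝ)..b, (1 - F t)) - (∫ t in (0:ℝ)..a, (1 - F t))
      = ∫ t in a..b, (1 - F t) := by
  have h1 : IntervalIntegrable (fun t => 1 - F t) volume 0 b := by
    rw [intervalIntegrable_iff_integrableOn_Ioc_of_le (by linarith)]
    exact hint.mono_set Ioc_subset_Ioi_self
  have h2 : IntervalIntegrable (fun t => 1 - F t) volume 0 a := by
    rw [intervalIntegrable_iff_integrableOn_Ioc_of_le ha.le]
    exact hint.mono_set Ioc_subset_Ioi_self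
  exact intervalIntegral.integral_interval_sub_left h1 h2

end auxGL

/-- `G(y, z) = B(-y/z)` is Lipschitz continuous on `ℝ × [1, ∞)`. -/
theorem G_lipschitz
    (C : ℝ) (hC : 0 < C)
    (F : ℝ → ℝ)
    (hmono : Monotone F)
    (hneg : ∀ z < (0 : ℝ), F z = 0)
    (hle : ∀ z, F z ≤ 1)
    (hbd : ∀ z ≥ (0 : ℝ), z ^ 3 * (1 - F z) ≤ C)
    (hint : IntegrableOn (fun t => 1 - F t) (Ioi (0 : ℝ))) :
    ∃ K : NNReal,
      LipschitzOnWith K (fun p : ℝ × ℝ => Bfun F (-p.1 / p.2))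
        (univ ×ˢ Ici (1 : ℝ)) := by
  -- evaluation of Bfun
  have hBneg : ∀ y z : ℝ, y < 0 → 0 < z →
      Bfun F (-y / z) = ∫ t in (0:ℝ)..(z / -y), (1 - F t) := by
    intro y z hy hz
    have hw : 0 < -y / z := div_pos (by linarith) hz
    have hu : (0:ℝ) < z / -y := div_pos hz (by linarith)
    simp only [Bfun, if_pos hw]
    rw [inv_div, ← integral_Ioc_eq_integral_Ioo,
      ← intervalIntegral.integral_of_le hu.le]
  have hBpos : ∀ y z : ℝ, 0 ≤ y → 0 < z →
      Bfun F (-y / z) = ∫ t in Ioi (0:ℝ), (1 - F t) := by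
    intro y z hy hz
    have hw : ¬ 0 < -y / z := by
      rw [not_lt]
      exact div_nonpos_of_nonpos_of_nonneg (by linarith) hz.le
    simp only [Bfun, if_neg hw]
  -- step in the y-variable
  have hy_step : ∀ z : ℝ, 1 ≤ z → ∀ y1 y2 : ℝ, y1 ≤ y2 →
      |Bfun F (-y1 / z) - Bfun F (-y2 / z)| ≤ (C + 1) * (y2 - y1) := by
    intro z hz y1 y2 h12
    have hz0 : (0:ℝ) < z := by linarith
    rcases lt_or_ge y1 0 with hy1 | hy1
    · rcases lt_or_ge y2 0 with hy2 | hy2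
      · have hny1 : (0:ℝ) < -y1 := by linarith
        have hny2 : (0:ℝ) < -y2 := by linarith
        have ha : 0 < z / -y1 := div_pos hz0 hny1
        have hab : z / -y1 ≤ z / -y2 :=
          div_le_div_of_nonneg_left hz0.le hny2 (by linarith)
        rw [hBneg y1 z hy1 hz0, hBneg y2 z hy2 hz0, abs_sub_comm,
          GL_H_sub hint ha hab, abs_of_nonneg (GL_int_nonneg hle hab)]
        have hmain := GL_int_le_main hC hmono hneg hbd hint ha hab
        have e : (z / -y1)⁻¹ - (z / -y2)⁻¹ = (y2 - y1) / z := by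
          rw [inv_div, inv_div]; ring
        rw [e] at hmain
        calc ∫ t in (z / -y1)..(z / -y2), (1 - F t)
            ≤ (C + 1) * ((y2 - y1) / z) := hmain
          _ ≤ (C + 1) * (y2 - y1) :=
              mul_le_mul_of_nonneg_left (div_le_self (by linarith) hz) (by linarith)
      · have hny1 : (0:ℝ) < -y1 := by linarith
        have ha : 0 < z / -y1 := div_pos hz0 hny1
        have htail0 : 0 ≤ ∫ t in Ioi (z / -y1), (1 - F t) :=
          setIntegral_nonneg measurableSet_Ioi (fun x _ => by linarith [hle x])
        rw [hBneg y1 z hy1 hz0, hBpos y2 z hy2 hz0, abs_sub_comm,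
          GL_L_split hint ha, add_sub_cancel_left, abs_of_nonneg htail0]
        calc ∫ t in Ioi (z / -y1), (1 - F t)
            ≤ (C + 1) * (z / -y1)⁻¹ := GL_tail_le hC hmono hneg hbd hint ha
          _ = (C + 1) * (-y1 / z) := by rw [inv_div]
          _ ≤ (C + 1) * (y2 - y1) := by
              apply mul_le_mul_of_nonneg_left _ (by linarith)
              have := div_le_self (by linarith : (0:ℝ) ≤ -y1) hz
              linarith
    · rw [hBpos y1 z hy1 hz0, hBpos y2 z (by linarith) hz0, sub_self, abs_zero]
      exact mul_nonneg (by linarith) (by linarith)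
  -- step in the z-variable
  have hz_step : ∀ y z1 z2 : ℝ, 1 ≤ z1 → z1 ≤ z2 →
      |Bfun F (-y / z1) - Bfun F (-y / z2)| ≤ (C + 1) * (z2 - z1) := by
    intro y z1 z2 hz1 h12
    have hz10 : (0:ℝ) < z1 := by linarith
    have hz20 : (0:ℝ) < z2 := by linarith
    rcases lt_or_ge y 0 with hy | hy
    · have hny : (0:ℝ) < -y := by linarith
      have ha : 0 < z1 / -y := div_pos hz10 hny
      have hab : z1 / -y ≤ z2 / -y := by gcongr
      rw [hBneg y z1 hy hz10, hBneg y z2 hy hz20, abs_sub_comm,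
        GL_H_sub hint ha hab, abs_of_nonneg (GL_int_nonneg hle hab)]
      rcases le_or_gt 1 (-y) with hy1 | hy1
      · calc ∫ t in (z1 / -y)..(z2 / -y), (1 - F t)
            ≤ z2 / -y - z1 / -y := GL_int_le_len hmono hneg hint ha hab
          _ = (z2 - z1) / -y := by ring
          _ ≤ z2 - z1 := div_le_self (by linarith) hy1
          _ ≤ (C + 1) * (z2 - z1) := le_mul_of_one_le_left (by linarith) (by linarith)
      · calc ∫ t in (z1 / -y)..(z2 / -y), (1 - F t)
            ≤ (C + 1) * ((z1 / -y)⁻¹ - (z2 / -y)⁻¹) :=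
              GL_int_le_main hC hmono hneg hbd hint ha hab
          _ ≤ (C + 1) * (z2 - z1) := by
              apply mul_le_mul_of_nonneg_left _ (by linarith)
              rw [inv_div, inv_div, div_sub_div _ _ hz10.ne' hz20.ne',
                div_le_iff₀ (mul_pos hz10 hz20)]
              have h1 : -y * (z2 - z1) ≤ 1 * (z2 - z1) :=
                mul_le_mul_of_nonneg_right hy1.le (by linarith)
              have h2 : (z2 - z1) * 1 ≤ (z2 - z1) * (z1 * z2) :=
                mul_le_mul_of_nonneg_left (by nlinarith) (by linarith)
              nlinarith
    · rw [hBpos y z1 hy hz10, hBpos y z2 hy hz20, sub_self, abs_zero]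
      exact mul_nonneg (by linarith) (by linarith)
  -- assemble
  refine ⟨NNReal.mk (2 * (C + 1)) (by positivity), ?_⟩
  refine LipschitzOnWith.of_dist_le_mul ?_
  rintro ⟨y1, z1⟩ hp ⟨y2, z2⟩ hq
  simp only [Set.mem_prod, mem_univ, mem_Ici, true_and] at hp hq
  have key1 : |Bfun F (-y1 / z1) - Bfun F (-y1 / z2)| ≤ (C + 1) * |z1 - z2| := by
    rcases le_total z1 z2 with h | h
    · rw [abs_sub_comm z1 z2, abs_of_nonneg (sub_nonneg.2 h)]
      exact hz_step y1 z1 z2 hp h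
    · rw [abs_of_nonneg (sub_nonneg.2 h), abs_sub_comm]
      exact hz_step y1 z2 z1 hq h
  have key2 : |Bfun F (-y1 / z2) - Bfun F (-y2 / z2)| ≤ (C + 1) * |y1 - y2| := by
    rcases le_total y1 y2 with h | h
    · rw [abs_sub_comm y1 y2, abs_of_nonneg (sub_nonneg.2 h)]
      exact hy_step z2 hq y1 y2 h
    · rw [abs_of_nonneg (sub_nonneg.2 h), abs_sub_comm]
      exact hy_step z2 hq y2 y1 h
  have hdist : dist ((y1, z1) : ℝ × ℝ) (y2, z2) = max |y1 - y2| |z1 - z2| := by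
    rw [Prod.dist_eq]
    simp [Real.dist_eq]
  have hM1 : |y1 - y2| ≤ max |y1 - y2| |z1 - z2| := le_max_left _ _
  have hM2 : |z1 - z2| ≤ max |y1 - y2| |z1 - z2| := le_max_right _ _
  have htri : |Bfun F (-y1 / z1) - Bfun F (-y2 / z2)|
      ≤ |Bfun F (-y1 / z1) - Bfun F (-y1 / z2)|
        + |Bfun F (-y1 / z2) - Bfun F (-y2 / z2)| := abs_sub_le _ _ _
  simp only [Real.dist_eq] at *
  rw [NNReal.coe_mk, hdist]
  have e1 : (C + 1) * |z1 - z2| ≤ (C + 1) * max |y1 - y2| |z1 - z2| :=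
    mul_le_mul_of_nonneg_left hM2 (by linarith)
  have e2 : (C + 1) * |y1 - y2| ≤ (C + 1) * max |y1 - y2| |z1 - z2| :=
    mul_le_mul_of_nonneg_left hM1 (by linarith)
  calc |Bfun F (-y1 / z1) - Bfun F (-y2 / z2)|
      ≤ |Bfun F (-y1 / z1) - Bfun F (-y1 / z2)|
        + |Bfun F (-y1 / z2) - Bfun F (-y2 / z2)| := htri
    _ ≤ (C + 1) * |z1 - z2| + (C + 1) * |y1 - y2| := add_le_add key1 key2
    _ ≤ 2 * (C + 1) * max |y1 - y2| |z1 - z2| := by linarith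
end
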